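/- For the quadratic function f(x) on ℝⁿ (any polynomial of degree at most 2), there exists τ > 0 such that dist(x, {f = 0}) ≤ τ(|f(x)| + |f(x)|^{1/2}) for all x ∈ ℝⁿ, provided {f = 0} is nonempty. -/

import Mathlib

open scoped RealInnerProductSpace
open Real Finset

noncomputable def Qf {n : ℕ} (μ : Fin n → ℝ) (w : EuclideanSpace ℝ (Fin n)) : ℝ :=
  ∑ i, μ i * w i ^ 2

noncomputable def Bf {n : ℕ} (μ : Fin n → ℝ) : ℝ :=
  1 + ∑ i, Real.sqrt (1 / |μ i|)

lemma Bf_pos {n : ℕ} (μ : Fin n → ℝ) : 0 < Bf μ := by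
  have : 0 ≤ ∑ i, Real.sqrt (1 / |μ i|) :=
    Finset.sum_nonneg fun i _ => Real.sqrt_nonneg _
  unfold Bf; linarith

lemma sqrt_inv_abs_le_Bf {n : ℕ} (μ : Fin n → ℝ) (i : Fin n) :
    Real.sqrt (1 / |μ i|) ≤ Bf μ := by
  have h1 : Real.sqrt (1 / |μ i|) ≤ ∑ j, Real.sqrt (1 / |μ j|) :=
    Finset.single_le_sum (f := fun j => Real.sqrt (1 / |μ j|))
      (fun j _ => Real.sqrt_nonneg _) (Finset.mem_univ i)
  unfold Bf; linarith

/-- sqrt x - sqrt y ≤ sqrt (x - y) for 0 ≤ y ≤ x -/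
lemma sqrt_sub_sqrt_le (x y : ℝ) (hy : 0 ≤ y) (hxy : y ≤ x) :
    Real.sqrt x - Real.sqrt y ≤ Real.sqrt (x - y) := by
  have h1 : Real.sqrt x ≤ Real.sqrt (x - y) + Real.sqrt y := by
    have hc : 0 ≤ Real.sqrt (x - y) + Real.sqrt y :=
      add_nonneg (Real.sqrt_nonneg _) (Real.sqrt_nonneg _)
    rw [Real.sqrt_le_left hc]
    have h2 : Real.sqrt (x - y) ^ 2 = x - y := Real.sq_sqrt (by linarith)
    have h3 : Real.sqrt y ^ 2 = y := Real.sq_sqrt hy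
    nlinarith [Real.sqrt_nonneg (x - y), Real.sqrt_nonneg y]
  linarith

lemma bump {n : ℕ} (μ : Fin n → ℝ) (v : EuclideanSpace ℝ (Fin n)) (i : Fin n)
    (hm : 0 < μ i) (δ : ℝ) (hδ : 0 < δ) :
    ∃ z : EuclideanSpace ℝ (Fin n), Qf μ z = Qf μ v + δ ∧
      dist v z ≤ Real.sqrt (1 / μ i) * Real.sqrt δ := by
  set a : ℝ := v i with ha
  set m : ℝ := μ i with hmdef
  have hdm : 0 ≤ δ / m := le_of_lt (div_pos hδ hm)
  set r : ℝ := (if 0 ≤ a then 1 else -1) * Real.sqrt (a ^ 2 + δ / m) with hrdef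
  have hsum : (0:ℝ) ≤ a ^ 2 + δ / m := by positivity
  have hr2 : r ^ 2 = a ^ 2 + δ / m := by
    rcases le_or_gt 0 a with h | h
    · simp only [hrdef, if_pos h, one_mul]
      exact Real.sq_sqrt hsum
    · simp only [hrdef, if_neg (not_le.mpr h)]
      rw [mul_pow]
      rw [Real.sq_sqrt hsum]; ring
  have har : a * r = |a| * Real.sqrt (a ^ 2 + δ / m) := by
    rcases le_or_gt 0 a with h | h
    · simp [hrdef, if_pos h, abs_of_nonneg h]
    · simp only [hrdef, if_neg (not_le.mpr h), abs_of_neg h]; ring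
  have habs : |a| ≤ Real.sqrt (a ^ 2 + δ / m) := by
    rw [← Real.sqrt_sq_eq_abs]
    exact Real.sqrt_le_sqrt (by linarith)
  have hkey : (a - r) ^ 2 ≤ δ / m := by
    have h1 : a ^ 2 ≤ a * r := by
      rw [har]
      calc a ^ 2 = |a| * |a| := by rw [sq, ← abs_mul_abs_self]
      _ ≤ |a| * Real.sqrt (a ^ 2 + δ / m) :=
          mul_le_mul_of_nonneg_left habs (abs_nonneg a)
    nlinarith
  refine ⟨WithLp.toLp 2 (Function.update v i r), ?_, ?_⟩
  · have hfun : (fun j => μ j * (Function.update v i r j) ^ 2)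
        = Function.update (fun j => μ j * (v j) ^ 2) i (μ i * r ^ 2) := by
      funext j
      by_cases hj : j = i
      · subst hj; simp [Function.update_self]
      · simp [Function.update_of_ne hj]
    have h1 : Qf μ (WithLp.toLp 2 (Function.update v i r)) = μ i * r ^ 2 + ∑ j ∈ Finset.univ.erase i, μ j * (v j) ^ 2 := by
      unfold Qf
      calc ∑ j, μ j * (Function.update v i r j) ^ 2
          = ∑ j, Function.update (fun j => μ j * (v j) ^ 2) i (μ i * r ^ 2) j := by rw [hfun]
        _ = μ i * r ^ 2 + ∑ j ∈ Finset.univ.erase i, μ j * (v j) ^ 2 := by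
            rw [← Finset.add_sum_erase _ _ (Finset.mem_univ i)]
            congr 1
            · simp
            · apply Finset.sum_congr rfl
              intro j hj
              rw [Function.update_of_ne (Finset.ne_of_mem_erase hj)]
    have h2 : Qf μ v = μ i * a ^ 2 + ∑ j ∈ Finset.univ.erase i, μ j * (v j) ^ 2 := by
      unfold Qf
      rw [← Finset.add_sum_erase _ _ (Finset.mem_univ i)]
    rw [h1, h2, hr2]
    field_simp
    ring
  · have hd : dist v (WithLp.toLp 2 (Function.update v i r)) = |a - r| := by
      rw [EuclideanSpace.dist_eq]
      have : ∑ j, dist (v j) (Function.update v i r j) ^ 2 = (a - r)^2 := by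
        rw [Finset.sum_eq_single i]
        · rw [Function.update_self, Real.dist_eq]
          rw [sq_abs]
        · intro j _ hj
          rw [Function.update_of_ne hj, dist_self]
          norm_num
        · intro h; exact absurd (Finset.mem_univ i) h
      rw [WithLp.ofLp_toLp, this, Real.sqrt_sq_eq_abs]
    rw [hd, ← Real.sqrt_sq_eq_abs]
    calc Real.sqrt ((a - r)^2) ≤ Real.sqrt (δ / m) := Real.sqrt_le_sqrt hkey
      _ = Real.sqrt (1 / m) * Real.sqrt δ := by
          rw [← Real.sqrt_mul (by positivity)]
          congr 1
          field_simp

lemma scale {n : ℕ} (μ : Fin n → ℝ) (hneg : ∀ i, μ i ≤ 0) (j : Fin n) (hj : μ j ≠ 0)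
    (γ : ℝ) (hγ : γ ≤ 0) (v : EuclideanSpace ℝ (Fin n)) (hv : Qf μ v < γ) :
    ∃ z : EuclideanSpace ℝ (Fin n), Qf μ z = γ ∧
      dist v z ≤ Bf μ * Real.sqrt (γ - Qf μ v) := by
  classical
  set s : ℝ := -Qf μ v with hs
  set g : ℝ := -γ with hg
  have hspos : 0 < s := by simp only [hs]; linarith
  have hgnn : 0 ≤ g := by simp only [hg]; linarith
  have hgs : g < s := by simp only [hg, hs]; linarith
  set t : ℝ := Real.sqrt (g / s) with ht
  have htnn : 0 ≤ t := Real.sqrt_nonneg _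
  have ht2 : t ^ 2 = g / s := Real.sq_sqrt (div_nonneg hgnn hspos.le)
  have ht1 : t ≤ 1 := by
    rw [ht, show (1:ℝ) = Real.sqrt 1 by rw [Real.sqrt_one]]
    exact Real.sqrt_le_sqrt (by rw [div_le_one hspos]; linarith)
  set F : Finset (Fin n) := Finset.univ.filter (fun i => μ i ≠ 0) with hF
  have hjF : j ∈ F := by simp [hF, hj]
  have hFim : ((F.image fun i => |μ i|)).Nonempty := ⟨|μ j|, Finset.mem_image_of_mem _ hjF⟩
  set L : ℝ := (F.image fun i => |μ i|).min' hFim with hL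
  obtain ⟨i₀, hi₀F, hi₀⟩ := Finset.mem_image.mp ((F.image fun i => |μ i|).min'_mem hFim)
  have hi₀ne : μ i₀ ≠ 0 := (Finset.mem_filter.mp hi₀F).2
  have hLpos : 0 < L := by rw [hL, ← hi₀]; exact abs_pos.mpr hi₀ne
  have hLle : ∀ i ∈ F, L ≤ |μ i| := fun i hi =>
    (F.image fun i => |μ i|).min'_le _ (Finset.mem_image_of_mem _ hi)
  set z : EuclideanSpace ℝ (Fin n) := WithLp.toLp 2 (fun i => if μ i = 0 then v i else t * v i) with hz
  have hQv_F : Qf μ v = ∑ i ∈ F, μ i * v i ^ 2 := by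
    unfold Qf
    rw [Finset.sum_filter_of_ne]
    intro i _ hne hzero
    rw [hzero] at hne; simp at hne
  have hQz : Qf μ z = γ := by
    have h1 : Qf μ z = t ^ 2 * Qf μ v := by
      unfold Qf
      rw [Finset.mul_sum]
      apply Finset.sum_congr rfl
      intro i _
      by_cases hi : μ i = 0
      · simp [hz, hi]
      · simp only [hz, hi, if_neg hi, if_false]
        ring
    rw [h1, ht2]
    have : Qf μ v = -s := by simp [hs]
    rw [this]
    field_simp [hg]; linarith
  refine ⟨z, hQz, ?_⟩
  have hdist : dist v z = (1 - t) * Real.sqrt (∑ i ∈ F, v i ^ 2) := by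
    rw [EuclideanSpace.dist_eq]
    have hterm : ∑ i, dist (v i) (z i) ^ 2 = (1 - t)^2 * ∑ i ∈ F, v i ^ 2 := by
      rw [Finset.mul_sum, ← Finset.sum_filter_of_ne (p := fun i => μ i ≠ 0)
        (f := fun i => dist (v i) (z i) ^ 2)]
      · apply Finset.sum_congr rfl
        intro i hi
        have hine : μ i ≠ 0 := (Finset.mem_filter.mp hi).2
        simp only [hz, WithLp.ofLp_toLp, if_neg hine, Real.dist_eq]
        rw [sq_abs]
        ring
      · intro i _ hne
        by_contra hzero
        simp only [hz, hzero, if_pos, dist_self] at hne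
        simp at hne
    rw [hterm, Real.sqrt_mul (by positivity), Real.sqrt_sq (by linarith)]
  have hsum_le : ∑ i ∈ F, v i ^ 2 ≤ s / L := by
    rw [le_div_iff₀ hLpos, mul_comm]
    calc L * ∑ i ∈ F, v i ^ 2 = ∑ i ∈ F, L * v i ^ 2 := by rw [Finset.mul_sum]
      _ ≤ ∑ i ∈ F, (-μ i) * v i ^ 2 := by
          apply Finset.sum_le_sum
          intro i hi
          have h1 := hLle i hi
          have h2 : |μ i| = -μ i := abs_of_nonpos (hneg i)
          nlinarith [sq_nonneg (v i)]
      _ = s := by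
          simp only [hs, hQv_F, ← Finset.sum_neg_distrib]
          apply Finset.sum_congr rfl
          intro i _; ring
  calc dist v z = (1 - t) * Real.sqrt (∑ i ∈ F, v i ^ 2) := hdist
    _ ≤ (1 - t) * Real.sqrt (s / L) := by
        apply mul_le_mul_of_nonneg_left (Real.sqrt_le_sqrt hsum_le) (by linarith)
    _ = (1 - t) * Real.sqrt s * Real.sqrt (1 / L) := by
        rw [mul_assoc, ← Real.sqrt_mul hspos.le]
        congr 2
        field_simp
    _ = (Real.sqrt s - Real.sqrt g) * Real.sqrt (1 / L) := by
        congr 1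
        rw [sub_mul, one_mul, ht, ← Real.sqrt_mul (div_nonneg hgnn hspos.le),
          div_mul_cancel₀ _ hspos.ne']
    _ ≤ Real.sqrt (s - g) * Real.sqrt (1 / L) := by
        apply mul_le_mul_of_nonneg_right (sqrt_sub_sqrt_le s g hgnn hgs.le) (Real.sqrt_nonneg _)
    _ ≤ Real.sqrt (s - g) * Bf μ := by
        apply mul_le_mul_of_nonneg_left _ (Real.sqrt_nonneg _)
        calc Real.sqrt (1 / L) = Real.sqrt (1 / |μ i₀|) := by rw [hL, ← hi₀]
          _ ≤ Bf μ := sqrt_inv_abs_le_Bf μ i₀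
    _ = Bf μ * Real.sqrt (γ - Qf μ v) := by
        rw [mul_comm]
        congr 1
        simp only [hs, hg]
        ring

lemma Qf_neg {n : ℕ} (μ : Fin n → ℝ) (w : EuclideanSpace ℝ (Fin n)) :
    Qf (fun i => -μ i) w = -(Qf μ w) := by
  unfold Qf
  rw [← Finset.sum_neg_distrib]
  apply Finset.sum_congr rfl
  intro i _; ring

lemma Bf_neg {n : ℕ} (μ : Fin n → ℝ) : Bf (fun i => -μ i) = Bf μ := by
  unfold Bf
  congr 1
  apply Finset.sum_congr rfl
  intro i _
  rw [abs_neg]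

lemma auxQ {n : ℕ} (μ : Fin n → ℝ) (γ : ℝ) (hw : ∃ w : EuclideanSpace ℝ (Fin n), Qf μ w = γ)
    (v : EuclideanSpace ℝ (Fin n)) (hle : Qf μ v ≤ γ) :
    ∃ z : EuclideanSpace ℝ (Fin n), Qf μ z = γ ∧
      dist v z ≤ Bf μ * Real.sqrt (γ - Qf μ v) := by
  rcases eq_or_lt_of_le hle with heq | hlt
  · refine ⟨v, heq, ?_⟩
    rw [dist_self]
    exact mul_nonneg (Bf_pos μ).le (Real.sqrt_nonneg _)
  · by_cases hpos : ∃ i, 0 < μ i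
    · obtain ⟨i, hi⟩ := hpos
      obtain ⟨z, hz1, hz2⟩ := bump μ v i hi (γ - Qf μ v) (by linarith)
      refine ⟨z, by rw [hz1]; ring, ?_⟩
      calc dist v z ≤ Real.sqrt (1 / μ i) * Real.sqrt (γ - Qf μ v) := hz2
        _ ≤ Bf μ * Real.sqrt (γ - Qf μ v) := by
            apply mul_le_mul_of_nonneg_right _ (Real.sqrt_nonneg _)
            rw [show (1 / μ i) = 1 / |μ i| by rw [abs_of_pos hi]]
            exact sqrt_inv_abs_le_Bf μ i
    · push_neg at hpos
      obtain ⟨w, hwγ⟩ := hw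
      have hγ0 : γ ≤ 0 := by
        rw [← hwγ]
        unfold Qf
        apply Finset.sum_nonpos
        intro i _
        exact mul_nonpos_of_nonpos_of_nonneg (hpos i) (sq_nonneg _)
      have hex : ∃ j, μ j ≠ 0 := by
        by_contra hall
        push_neg at hall
        have h1 : Qf μ v = 0 := by
          unfold Qf; apply Finset.sum_eq_zero; intro i _; rw [hall i]; ring
        have h2 : γ = 0 := by
          rw [← hwγ]; unfold Qf; apply Finset.sum_eq_zero; intro i _; rw [hall i]; ring
        rw [h1, h2] at hlt; exact lt_irrefl 0 hlt
      obtain ⟨j, hj⟩ := hex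
      exact scale μ hpos j hj γ hγ0 v hlt

lemma coreQ {n : ℕ} (μ : Fin n → ℝ) (γ : ℝ) (hw : ∃ w : EuclideanSpace ℝ (Fin n), Qf μ w = γ)
    (v : EuclideanSpace ℝ (Fin n)) :
    ∃ z : EuclideanSpace ℝ (Fin n), Qf μ z = γ ∧
      dist v z ≤ Bf μ * Real.sqrt |Qf μ v - γ| := by
  rcases le_or_gt (Qf μ v) γ with h | h
  · obtain ⟨z, hz1, hz2⟩ := auxQ μ γ hw v h
    refine ⟨z, hz1, ?_⟩
    rwa [show |Qf μ v - γ| = γ - Qf μ v by rw [abs_sub_comm, abs_of_nonneg (by linarith)]]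
  · obtain ⟨w, hwγ⟩ := hw
    obtain ⟨z, hz1, hz2⟩ := auxQ (fun i => -μ i) (-γ)
      ⟨w, by rw [Qf_neg, hwγ]⟩ v (by rw [Qf_neg]; linarith)
    rw [Qf_neg] at hz1
    refine ⟨z, by linarith, ?_⟩
    rw [Qf_neg, Bf_neg] at hz2
    calc dist v z ≤ Bf μ * Real.sqrt (-γ - -Qf μ v) := hz2
      _ = Bf μ * Real.sqrt |Qf μ v - γ| := by
          congr 1
          rw [abs_of_pos (by linarith)]
          ring_nf

theorem stmt2 {n : ℕ} (A : EuclideanSpace ℝ (Fin n) →L[ℝ] EuclideanSpace ℝ (Fin n))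
    (hA : ∀ x y, ⟪A x, y⟫ = ⟪x, A y⟫)
    (b : EuclideanSpace ℝ (Fin n)) (c : ℝ)
    (f : EuclideanSpace ℝ (Fin n) → ℝ)
    (hf : ∀ x, f x = ⟪A x, x⟫ / 2 + ⟪b, x⟫ + c)
    (hne : {x | f x = 0}.Nonempty) :
    ∃ τ > (0:ℝ), ∀ x,
      Metric.infDist x {y | f y = 0} ≤ τ * (|f x| + |f x| ^ ((1:ℝ)/2)) := by
  classical
  have hrpow : ∀ r : ℝ, |r| ^ ((1:ℝ)/2) = Real.sqrt |r| := fun r =>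
    (Real.sqrt_eq_rpow |r|).symm
  set A' : (EuclideanSpace ℝ (Fin n)) →ₗ[ℝ] (EuclideanSpace ℝ (Fin n)) :=
    (A : EuclideanSpace ℝ (Fin n) →ₗ[ℝ] EuclideanSpace ℝ (Fin n)) with hA'def
  have hA' : A'.IsSymmetric := fun x y => hA x y
  set K : Submodule ℝ (EuclideanSpace ℝ (Fin n)) := LinearMap.ker A' with hK
  set b₂ : EuclideanSpace ℝ (Fin n) := (K.orthogonalProjectionOnto b : EuclideanSpace ℝ (Fin n)) with hb₂
  have hb₂K : b₂ ∈ K := (K.orthogonalProjectionOnto b).2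
  have hAb₂ : A b₂ = 0 := hb₂K
  have hbb₂ : ⟪b, b₂⟫ = ‖b₂‖ ^ 2 := by
    have horth : b - b₂ ∈ Kᗮ := Submodule.sub_starProjection_mem_orthogonal b
    have h0 : ⟪b - b₂, b₂⟫ = 0 := by
      rw [real_inner_comm]
      exact (Submodule.mem_orthogonal K (b - b₂)).mp horth b₂ hb₂K
    have h1 : ⟪b, b₂⟫ - ⟪b₂, b₂⟫ = 0 := by rwa [inner_sub_left] at h0
    rw [real_inner_self_eq_norm_sq] at h1
    linarith
  by_cases hb2 : b₂ = 0
  case neg =>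
    -- Case 1: the projection of b on ker A is nonzero; move along b₂.
    have hnorm : (0:ℝ) < ‖b₂‖ := norm_pos_iff.mpr hb2
    refine ⟨1 / ‖b₂‖, by positivity, fun x => ?_⟩
    set t : ℝ := -f x / ‖b₂‖ ^ 2 with htdef
    have hxb₂ : ⟪A x, b₂⟫ = 0 := by
      rw [hA x b₂, hAb₂, inner_zero_right]
    have hmem : x + t • b₂ ∈ {y | f y = 0} := by
      simp only [Set.mem_setOf_eq]
      rw [hf, map_add, map_smul, hAb₂, smul_zero, add_zero, inner_add_right,
        inner_add_right, real_inner_smul_right, real_inner_smul_right, hbb₂, hxb₂,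
        mul_zero, add_zero]
      have hb4 : ‖b₂‖ ^ 2 ≠ 0 := by positivity
      have h5 : t * ‖b₂‖ ^ 2 = -f x := by rw [htdef]; field_simp
      linarith [hf x, h5]
    have hd : dist x (x + t • b₂) = |f x| / ‖b₂‖ := by
      rw [dist_eq_norm]
      have : x - (x + t • b₂) = (-t) • b₂ := by
        rw [neg_smul]; abel
      rw [this, norm_smul, norm_neg, Real.norm_eq_abs, htdef, abs_div, abs_neg, abs_pow,
        abs_norm]
      rw [pow_two, mul_comm, div_mul_eq_div_div]
      field_simp
    calc Metric.infDist x {y | f y = 0} ≤ dist x (x + t • b₂) :=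
          Metric.infDist_le_dist_of_mem hmem
      _ = |f x| / ‖b₂‖ := hd
      _ ≤ 1 / ‖b₂‖ * (|f x| + |f x| ^ ((1:ℝ)/2)) := by
          have h1 : (0:ℝ) ≤ |f x| ^ ((1:ℝ)/2) := Real.rpow_nonneg (abs_nonneg _) _
          rw [div_eq_mul_inv, one_div, mul_comm (‖b₂‖⁻¹)]
          apply mul_le_mul_of_nonneg_right _ (by positivity)
          linarith
  case pos =>
    -- Case 2: b ∈ (ker A)ᗮ = range A; translate and diagonalize.
    have hbKo : b ∈ Kᗮ := by
      have : b - b₂ ∈ Kᗮ := Submodule.sub_starProjection_mem_orthogonal (K := K) b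
      rwa [hb2, sub_zero] at this
    have hrange : LinearMap.range A' = Kᗮ := by
      apply Submodule.eq_of_le_of_finrank_eq
      · rintro u ⟨x, rfl⟩
        rw [Submodule.mem_orthogonal]
        intro v hv
        rw [real_inner_comm, hA' x v, LinearMap.mem_ker.mp hv, inner_zero_right]
      · have h1 : Module.finrank ℝ (LinearMap.range A') + Module.finrank ℝ K =
            Module.finrank ℝ (EuclideanSpace ℝ (Fin n)) :=
          LinearMap.finrank_range_add_finrank_ker A'
        have h2 : Module.finrank ℝ K + Module.finrank ℝ Kᗮ =
            Module.finrank ℝ (EuclideanSpace ℝ (Fin n)) :=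
          Submodule.finrank_add_finrank_orthogonal K
        omega
    obtain ⟨p, hp⟩ : b ∈ LinearMap.range A' := hrange ▸ hbKo
    set x₀ : EuclideanSpace ℝ (Fin n) := -p with hx₀def
    have hx₀ : A x₀ = -b := by
      show A' x₀ = -b
      rw [hx₀def, map_neg, hp]
    have hquad : ∀ x, f x = ⟪A (x - x₀), x - x₀⟫ / 2 + f x₀ := by
      intro x
      have hsymm : ⟪A (x - x₀), x₀⟫ = ⟪A x₀, x - x₀⟫ := by
        rw [hA (x - x₀) x₀, real_inner_comm]
      have hAx : A x = A (x - x₀) + A x₀ := by rw [← map_add]; congr 1; abel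
      rw [hf x, hf x₀, hAx]
      rw [inner_add_left]
      have e1 : ⟪A (x - x₀), x⟫ = ⟪A (x - x₀), x - x₀⟫ + ⟪A (x - x₀), x₀⟫ := by
        rw [← inner_add_right]; congr 1; abel
      have e2 : ⟪A x₀, x⟫ = ⟪A x₀, x - x₀⟫ + ⟪A x₀, x₀⟫ := by
        rw [← inner_add_right]; congr 1; abel
      have e3 : ⟪b, x⟫ = ⟪b, x - x₀⟫ + ⟪b, x₀⟫ := by
        rw [← inner_add_right]; congr 1; abel
      have e4 : ⟪A x₀, x - x₀⟫ = -⟪b, x - x₀⟫ := by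
        rw [hx₀, inner_neg_left]
      rw [e1, e2, e3, hsymm, e4]
      ring
    -- diagonalize
    have hn : Module.finrank ℝ (EuclideanSpace ℝ (Fin n)) = n := finrank_euclideanSpace_fin
    set e := hA'.eigenvectorBasis hn with he
    set ev := hA'.eigenvalues hn with hev
    set μ : Fin n → ℝ := fun i => ev i / 2 with hμ
    set γ : ℝ := -f x₀ with hγ
    set g : EuclideanSpace ℝ (Fin n) → EuclideanSpace ℝ (Fin n) :=
      fun x => e.repr (x - x₀) with hg
    have hQg : ∀ x, f x = Qf μ (g x) - γ := by
      intro x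
      have h1 : ⟪A (x - x₀), x - x₀⟫ = ∑ i, ev i * (e.repr (x - x₀) i) ^ 2 := by
        rw [← LinearIsometryEquiv.inner_map_map e.repr (A (x - x₀)) (x - x₀)]
        rw [show (⟪e.repr (A (x - x₀)), e.repr (x - x₀)⟫ : ℝ)
            = ∑ i, (e.repr (A (x - x₀)) i) * (e.repr (x - x₀) i) from by
          rw [PiLp.inner_apply]; apply Finset.sum_congr rfl; intro i _
          simp [RCLike.inner_apply, conj_trivial]; ring]
        apply Finset.sum_congr rfl
        intro i _
        rw [show A (x - x₀) = A' (x - x₀) from rfl,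
          hA'.eigenvectorBasis_apply_self_apply hn (x - x₀) i]
        simp only [RCLike.ofReal_real_eq_id, id_eq]
        ring
      rw [hquad x, h1]
      unfold Qf
      simp only [hγ, sub_neg_eq_add]
      congr 1
      rw [Finset.sum_div]
      refine Finset.sum_congr rfl fun i _ => ?_
      show ev i * e.repr (x - x₀) i ^ 2 / 2 = μ i * (g x) i ^ 2
      simp only [hμ, hg]
      ring
    have hgiso : Isometry g := by
      apply Isometry.of_dist_eq
      intro x y
      rw [dist_eq_norm, dist_eq_norm, hg]
      simp only
      rw [← map_sub, show x - x₀ - (y - x₀) = x - y by abel, LinearIsometryEquiv.norm_map]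
    have hgsurj : Function.Surjective g := by
      intro w
      exact ⟨x₀ + e.repr.symm w, by simp [hg]⟩
    have hSpre : {y | f y = 0} = g ⁻¹' {w | Qf μ w = γ} := by
      ext y
      simp only [Set.mem_setOf_eq, Set.mem_preimage, hQg y]
      constructor <;> intro h <;> linarith
    refine ⟨Bf μ, Bf_pos μ, fun x => ?_⟩
    have hT : ∃ w : EuclideanSpace ℝ (Fin n), Qf μ w = γ := by
      obtain ⟨x₁, hx₁⟩ := hne
      refine ⟨g x₁, ?_⟩
      have := hQg x₁
      rw [hx₁] at this
      linarith
    obtain ⟨z, hz1, hz2⟩ := coreQ μ γ hT (g x)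
    have himg : g '' {y | f y = 0} = {w | Qf μ w = γ} := by
      rw [hSpre, Set.image_preimage_eq _ hgsurj]
    have hinf : Metric.infDist x {y | f y = 0} = Metric.infDist (g x) {w | Qf μ w = γ} := by
      rw [← himg, Metric.infDist_image hgiso]
    rw [hinf]
    calc Metric.infDist (g x) {w | Qf μ w = γ} ≤ dist (g x) z :=
          Metric.infDist_le_dist_of_mem hz1
      _ ≤ Bf μ * Real.sqrt |Qf μ (g x) - γ| := hz2
      _ = Bf μ * Real.sqrt |f x| := by rw [hQg x]
      _ ≤ Bf μ * (|f x| + |f x| ^ ((1:ℝ)/2)) := by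
          apply mul_le_mul_of_nonneg_left _ (Bf_pos μ).le
          rw [hrpow]
          have := abs_nonneg (f x)
          linarith [Real.sqrt_nonneg |f x|]
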